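/- arXiv:1111.6179 — 3 statements merged into one kernel-verified Lean document; each statement's English description precedes it below -/
import Mathlib

section
/- Let ℓ ≥ 1 and k ≥ 1 be integers, let G be a graph on a finite vertex set V, let W ⊆ V with |W| ≤ ℓ, and let G′ be obtained from G by adding an arbitrary set of edges each having both endpoints in W. For a graph H on V, let N_k(H) denote the number of vertices of H lying in connected components of size exactly k. Then |N_k(G′) − N_k(G)| ≤ ℓk. -/
/-- The number of vertices in the connected component of `x` in the graph `G`. -/
noncomputable def compSize {V : Type*} (G : SimpleGraph V) (x : V) : ℕ :=
  Set.ncard {y | G.Reachable x y}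

/-- The number of vertices of `G` lying in connected components of size exactly `k`. -/
noncomputable def NVert {V : Type*} (G : SimpleGraph V) (k : ℕ) : ℕ :=
  Set.ncard {x | compSize G x = k}

lemma reachSet_eq {V : Type*} {G : SimpleGraph V} {x y : V} (h : G.Reachable x y) :
    {z | G.Reachable x z} = {z | G.Reachable y z} :=
  Set.ext fun z => ⟨fun hz => h.symm.trans hz, fun hz => h.trans hz⟩

lemma compSize_eq {V : Type*} {G : SimpleGraph V} {x y : V} (h : G.Reachable x y) :
    compSize G x = compSize G y := by
  unfold compSize; rw [reachSet_eq h]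

section aux
variable {V : Type*} {G G' : SimpleGraph V} {W : Finset V}

lemma walk_to_G (hadd : ∀ x y : V, G'.Adj x y → G.Adj x y ∨ (x ∈ W ∧ y ∈ W)) :
    ∀ {x y : V} (_ : G'.Walk x y), (∀ w ∈ W, ¬ G'.Reachable x w) → G.Reachable x y := by
  intro x y p
  induction p with
  | nil => intro _; exact SimpleGraph.Reachable.refl _
  | cons h q ih =>
      intro hx
      rcases hadd _ _ h with hG | ⟨hxW, _⟩
      · have hb : ∀ w ∈ W, ¬ G'.Reachable _ w := fun w hw hr =>
          hx w hw ((SimpleGraph.Adj.reachable h).trans hr)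
        exact (SimpleGraph.Adj.reachable hG).trans (ih hb)
      · exact absurd (SimpleGraph.Reachable.refl _) (hx _ hxW)

lemma reach_W (hadd : ∀ x y : V, G'.Adj x y → G.Adj x y ∨ (x ∈ W ∧ y ∈ W)) :
    ∀ {x w : V} (_ : G'.Walk x w), w ∈ W → ∃ w' ∈ W, G.Reachable x w' := by
  intro x w p
  induction p with
  | nil => intro hw; exact ⟨_, hw, SimpleGraph.Reachable.refl _⟩
  | cons h q ih =>
      intro hw
      rcases hadd _ _ h with hG | ⟨hxW, _⟩
      · obtain ⟨w', hw', hr⟩ := ih hw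
        exact ⟨w', hw', (SimpleGraph.Adj.reachable hG).trans hr⟩
      · exact ⟨_, hxW, SimpleGraph.Reachable.refl _⟩

end aux

lemma ncard_biUnion_le {V : Type*} [Fintype V] (s : Finset V) (f : V → Set V) :
    (⋃ i ∈ s, f i).ncard ≤ ∑ i ∈ s, (f i).ncard := by
  classical
  induction s using Finset.induction with
  | empty => simp
  | insert _ _ hx ih =>
      rename_i a s
      rw [Finset.sum_insert hx]
      calc (⋃ i ∈ insert a s, f i).ncard = (f a ∪ ⋃ i ∈ s, f i).ncard := by
            rw [Finset.set_biUnion_insert]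
        _ ≤ (f a).ncard + (⋃ i ∈ s, f i).ncard := Set.ncard_union_le _ _
        _ ≤ _ := by omega

/-- if `G'` is obtained from a graph `G` on a finite vertex set by adding
edges whose endpoints all lie in a set `W` of at most `ℓ` vertices, then the number of
vertices in components of size exactly `k` changes by at most `ℓ·k`. -/
theorem nvert_change_le (ℓ k : ℕ) (hℓ : 1 ≤ ℓ) (hk : 1 ≤ k)
    (V : Type) [Fintype V] (G G' : SimpleGraph V) (W : Finset V) (hW : W.card ≤ ℓ)
    (hle : G ≤ G')
    (hadd : ∀ x y : V, G'.Adj x y → G.Adj x y ∨ (x ∈ W ∧ y ∈ W)) :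
    |(NVert G' k : ℤ) - (NVert G k : ℤ)| ≤ (ℓ : ℤ) * k := by
  classical
  set S : Set V := {x | ∃ w ∈ W, G'.Reachable x w} with hS
  set A : Set V := {x | compSize G x = k} with hA
  set A' : Set V := {x | compSize G' x = k} with hA'
  -- outside S, components are unchanged
  have hsame : ∀ x ∉ S, {y | G.Reachable x y} = {y | G'.Reachable x y} := by
    intro x hx
    apply Set.eq_of_subset_of_subset
    · intro y hy; exact SimpleGraph.Reachable.mono hle hy
    · intro y hy
      obtain ⟨p⟩ := hy
      exact walk_to_G hadd p (fun w hw hr => hx ⟨w, hw, hr⟩)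
  have hdiff : A \ S = A' \ S := by
    ext x
    simp only [Set.mem_diff, hA, hA', Set.mem_setOf_eq]
    constructor
    · rintro ⟨h1, h2⟩
      refine ⟨?_, h2⟩
      unfold compSize at *
      rw [← hsame x h2]; exact h1
    · rintro ⟨h1, h2⟩
      refine ⟨?_, h2⟩
      unfold compSize at *
      rw [hsame x h2]; exact h1
  -- bound on A' ∩ S
  have key : ∀ (H : SimpleGraph V), (∀ x ∈ {x | compSize H x = k} ∩ S, ∃ w ∈ W, H.Reachable x w) →
      ({x | compSize H x = k} ∩ S).ncard ≤ ℓ * k := by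
    intro H hreach
    have hsub : {x | compSize H x = k} ∩ S ⊆ ⋃ w ∈ W, ({y | H.Reachable w y} ∩ {x | compSize H x = k}) := by
      intro x hx
      obtain ⟨w, hw, hr⟩ := hreach x hx
      exact Set.mem_biUnion hw ⟨hr.symm, hx.1⟩
    calc ({x | compSize H x = k} ∩ S).ncard
        ≤ (⋃ w ∈ W, ({y | H.Reachable w y} ∩ {x | compSize H x = k})).ncard :=
          Set.ncard_le_ncard hsub (Set.toFinite _)
      _ ≤ ∑ w ∈ W, ({y | H.Reachable w y} ∩ {x | compSize H x = k}).ncard :=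
          ncard_biUnion_le _ _
      _ ≤ ∑ _w ∈ W, k := by
          apply Finset.sum_le_sum
          intro w hw
          by_cases hck : compSize H w = k
          · calc ({y | H.Reachable w y} ∩ {x | compSize H x = k}).ncard
                ≤ {y | H.Reachable w y}.ncard :=
                  Set.ncard_le_ncard Set.inter_subset_left (Set.toFinite _)
              _ = k := hck
          · have : {y | H.Reachable w y} ∩ {x | compSize H x = k} = ∅ := by
              ext y
              simp only [Set.mem_inter_iff, Set.mem_setOf_eq, Set.mem_empty_iff_false, iff_false]
              rintro ⟨hr, hc⟩
              exact hck (compSize_eq hr ▸ hc)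
            simp [this]
      _ = W.card * k := by rw [Finset.sum_const, smul_eq_mul]
      _ ≤ ℓ * k := Nat.mul_le_mul_right _ hW
  have hA'S : (A' ∩ S).ncard ≤ ℓ * k := key G' (fun x hx => hx.2)
  have hAS : (A ∩ S).ncard ≤ ℓ * k := by
    apply key G
    rintro x ⟨_, w, hw, hr⟩
    obtain ⟨p⟩ := hr
    exact reach_W hadd p hw
  -- split counts
  have splitA : A.ncard = (A ∩ S).ncard + (A \ S).ncard := by
    rw [← Set.ncard_union_eq (Set.disjoint_left.mpr
      (fun x hx hx' => hx'.2 hx.2)) (Set.toFinite _) (Set.toFinite _), Set.inter_union_diff]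
  have splitA' : A'.ncard = (A' ∩ S).ncard + (A' \ S).ncard := by
    rw [← Set.ncard_union_eq (Set.disjoint_left.mpr
      (fun x hx hx' => hx'.2 hx.2)) (Set.toFinite _) (Set.toFinite _), Set.inter_union_diff]
  have hNG : NVert G k = A.ncard := rfl
  have hNG' : NVert G' k = A'.ncard := rfl
  rw [hNG, hNG', splitA, splitA', hdiff]
  have h1 : (A ∩ S).ncard ≤ ℓ * k := hAS
  have h2 : (A' ∩ S).ncard ≤ ℓ * k := hA'S
  rw [abs_le]
  constructor <;> push_cast <;> nlinarith [Nat.zero_le ((A ∩ S).ncard), Nat.zero_le ((A' ∩ S).ncard)]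
end

section
/- Let N ⊆ ℕ be infinite and for each n ∈ N let G_n be a graph on n vertices. For k ≥ 1 let N_k(G_n) denote the number of vertices of G_n lying in connected components of size exactly k, and let L_1(G_n) denote the number of vertices in a largest connected component of G_n. Suppose there exist ρ_k ∈ [0,1] with Σ_{k≥1} ρ_k = 1 such that, for every k ≥ 1, N_k(G_n)/n → ρ_k as n → ∞ along N. Then L_1(G_n)/n → 0 as n → ∞ along N. -/
open Filter

/-- The number of vertices in a largest connected component of `G`. -/
noncomputable def L1 {V : Type*} [Fintype V] (G : SimpleGraph V) : ℕ :=
  Finset.univ.sup fun x => compSize G x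

lemma key_bound {n K : ℕ} (G : SimpleGraph (Fin n)) (h : K < L1 G) :
    L1 G + ∑ k ∈ Finset.range K, NVert G (k + 1) ≤ n := by
  have hn : 0 < n := by
    rcases Nat.eq_zero_or_pos n with h0 | h0
    · subst h0
      simp [L1] at h
    · exact h0
  have : Nonempty (Fin n) := ⟨⟨0, hn⟩⟩
  obtain ⟨x₀, -, hx₀⟩ := Finset.exists_mem_eq_sup (Finset.univ) Finset.univ_nonempty
    (fun x => compSize G x)
  have hcomp : ∀ y, G.Reachable x₀ y → compSize G y = compSize G x₀ := by
    intro y hy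
    unfold compSize
    congr 1
    ext z
    exact ⟨fun h => hy.trans h, fun h => hy.symm.trans h⟩
  have hmle : L1 G ≤ NVert G (L1 G) := by
    have hsub : {y | G.Reachable x₀ y} ⊆ {x | compSize G x = L1 G} := by
      intro y hy
      simp only [Set.mem_setOf_eq] at *
      rw [hcomp y hy, ← hx₀]; rfl
    calc L1 G = compSize G x₀ := hx₀
    _ = Set.ncard {y | G.Reachable x₀ y} := rfl
    _ ≤ Set.ncard {x | compSize G x = L1 G} := Set.ncard_le_ncard hsub (Set.toFinite _)
    _ = NVert G (L1 G) := rfl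
  have hNV : ∀ j, NVert G j = (Finset.univ.filter (fun x => compSize G x = j)).card := by
    intro j
    rw [NVert, Set.ncard_eq_toFinset_card']
    congr 1
    ext x
    simp
  set F : Finset ℕ := insert (L1 G) ((Finset.range K).image (· + 1)) with hF
  have hmem : L1 G ∉ (Finset.range K).image (· + 1) := by
    simp only [Finset.mem_image, Finset.mem_range]
    rintro ⟨k, hk, hk2⟩
    omega
  have hsumF : ∑ j ∈ F, NVert G j ≤ n := by
    calc ∑ j ∈ F, NVert G j
        = ∑ j ∈ F, (Finset.univ.filter (fun x => compSize G x = j)).card := by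
          simp only [hNV]
    _ = (F.biUnion fun j => Finset.univ.filter (fun x => compSize G x = j)).card := by
          rw [Finset.card_biUnion]
          intro a _ b _ hab
          simp only [Finset.disjoint_left, Finset.mem_filter]
          rintro x ⟨-, hx1⟩ ⟨-, hx2⟩
          exact hab (hx1 ▸ hx2)
    _ ≤ Fintype.card (Fin n) := Finset.card_le_univ _
    _ = n := by simp
  have heq : ∑ j ∈ F, NVert G j = NVert G (L1 G) + ∑ k ∈ Finset.range K, NVert G (k + 1) := by
    rw [hF, Finset.sum_insert hmem, Finset.sum_image (by intro a _ b _ h; simp only at h; omega)]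
  omega

/-- if, along an infinite set `N` of values of `n`, the proportions
`N_k(G_n)/n` converge to constants `ρ_k ∈ [0,1]` with `Σ_{k ≥ 1} ρ_k = 1`, then the
rescaled size `L_1(G_n)/n` of the largest component tends to `0` along `N`. -/
theorem no_giant_of_converging_proportions (N : Set ℕ) (hN : N.Infinite)
    (G : ∀ n : ℕ, SimpleGraph (Fin n)) (rho : ℕ → ℝ)
    (hrange : ∀ k, 1 ≤ k → rho k ∈ Set.Icc (0 : ℝ) 1)
    (hsum : HasSum (fun k : ℕ => rho (k + 1)) 1)
    (hconv : ∀ k, 1 ≤ k →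
      Tendsto (fun n : ℕ => (NVert (G n) k : ℝ) / n) (atTop ⊓ 𝓟 N) (nhds (rho k))) :
    Tendsto (fun n : ℕ => (L1 (G n) : ℝ) / n) (atTop ⊓ 𝓟 N) (nhds 0) := by
  rw [Metric.tendsto_nhds]
  intro ε hε
  obtain ⟨K, hK⟩ := (hsum.tendsto_sum_nat.eventually
    (eventually_gt_nhds (show (1 : ℝ) - ε / 2 < 1 by linarith))).exists
  have hS : Tendsto (fun n : ℕ => ∑ k ∈ Finset.range K, (NVert (G n) (k + 1) : ℝ) / n)
      (atTop ⊓ 𝓟 N) (nhds (∑ k ∈ Finset.range K, rho (k + 1))) :=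
    tendsto_finset_sum _ (fun k _ => hconv (k + 1) (by omega))
  have h1 : ∀ᶠ n : ℕ in atTop ⊓ 𝓟 N,
      1 - ε / 2 < ∑ k ∈ Finset.range K, (NVert (G n) (k + 1) : ℝ) / n :=
    hS.eventually (eventually_gt_nhds hK)
  obtain ⟨n₀, hn₀⟩ := exists_nat_gt ((2 * K : ℝ) / ε)
  have h2 : ∀ᶠ n : ℕ in atTop ⊓ 𝓟 N, n₀ + 1 ≤ n :=
    (eventually_ge_atTop (n₀ + 1)).filter_mono inf_le_left
  filter_upwards [h1, h2] with n hn1 hn2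
  have hnpos : (0 : ℝ) < n := by
    have : 1 ≤ n := by omega
    exact_mod_cast Nat.lt_of_lt_of_le Nat.zero_lt_one this
  have hnbig : (2 * K : ℝ) / ε < n := by
    calc (2 * K : ℝ) / ε < n₀ := hn₀
    _ ≤ n := by exact_mod_cast Nat.le_of_succ_le hn2
  have hKn : (K : ℝ) / n < ε / 2 := by
    rw [div_lt_iff₀ hnpos]
    rw [div_lt_iff₀ hε] at hnbig
    linarith
  rw [Real.dist_eq, sub_zero, abs_of_nonneg (by positivity)]
  by_cases hL : L1 (G n) ≤ K
  · have : (L1 (G n) : ℝ) / n ≤ (K : ℝ) / n := by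
      gcongr
    linarith
  · push_neg at hL
    have hkey := key_bound (G n) hL
    have hcast : (L1 (G n) : ℝ) + ∑ k ∈ Finset.range K, (NVert (G n) (k + 1) : ℝ) ≤ n := by
      exact_mod_cast hkey
    have hsumdiv : ∑ k ∈ Finset.range K, (NVert (G n) (k + 1) : ℝ) / n
        = (∑ k ∈ Finset.range K, (NVert (G n) (k + 1) : ℝ)) / n := by
      rw [Finset.sum_div]
    have : (L1 (G n) : ℝ) / n ≤ 1 - (∑ k ∈ Finset.range K, (NVert (G n) (k + 1) : ℝ)) / n := by
      rw [div_le_iff₀ hnpos, sub_mul, one_mul, div_mul_cancel₀ _ hnpos.ne']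
      linarith
    rw [hsumdiv] at hn1
    linarith
end

section
/- Consider the system of differential equations ρ_k′(t) = −2k ρ_k(t) + k Σ_{c_1+c_2=k} ρ_{c_1}(t) ρ_{c_2}(t) for all k ≥ 1 and t ≥ 0 (the sum being over ordered pairs (c_1,c_2) of positive integers with c_1 + c_2 = k; right-derivative at t = 0), for differentiable functions ρ_k : [0,∞) → [0,1] with 0 ≤ Σ_{k≥1} ρ_k(t) ≤ 1 for all t, subject to the initial conditions ρ_1(0) = 1 and ρ_k(0) = 0 for k ≥ 2. This system has at most one solution: if (ρ_k)_{k≥1} and (σ_k)_{k≥1} are both solutions on [0,∞), then ρ_k(t) = σ_k(t) for all k ≥ 1 and t ≥ 0. -/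
/-- A solution of the system of differential equations associated to the Erdős–Rényi
random graph process (Smoluchowski coagulation equations with sol-gel interaction):
functions `ρ_k : [0,∞) → [0,1]` with `0 ≤ Σ_{k≥1} ρ_k(t) ≤ 1`, satisfying
`ρ_k'(t) = -2k ρ_k(t) + k Σ_{c₁+c₂=k} ρ_{c₁}(t) ρ_{c₂}(t)` for all `k ≥ 1` and `t ≥ 0`
(right-derivative at `t = 0`), with `ρ_1(0) = 1` and `ρ_k(0) = 0` for `k ≥ 2`. -/
structure ERSolution (rho : ℕ → ℝ → ℝ) : Prop where
  mem_Icc : ∀ k, 1 ≤ k → ∀ t : ℝ, 0 ≤ t → rho k t ∈ Set.Icc (0 : ℝ) 1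
  sum_mem_Icc : ∀ t : ℝ, 0 ≤ t → (∑' k : ℕ, rho (k + 1) t) ∈ Set.Icc (0 : ℝ) 1
  hasDeriv : ∀ k, 1 ≤ k → ∀ t : ℝ, 0 < t →
    HasDerivAt (rho k)
      (-(2 * k) * rho k t + k * ∑ c ∈ Finset.Ioo 0 k, rho c t * rho (k - c) t) t
  hasDeriv_zero : ∀ k, 1 ≤ k →
    HasDerivWithinAt (rho k)
      (-(2 * k) * rho k 0 + k * ∑ c ∈ Finset.Ioo 0 k, rho c 0 * rho (k - c) 0)
      (Set.Ici (0 : ℝ)) 0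
  init_one : rho 1 0 = 1
  init_zero : ∀ k, 2 ≤ k → rho k 0 = 0

/-- the Erdős–Rényi system of differential equations has at most one
solution on `[0,∞)`. -/
theorem er_system_unique (rho sigma : ℕ → ℝ → ℝ)
    (hrho : ERSolution rho) (hsigma : ERSolution sigma) :
    ∀ k, 1 ≤ k → ∀ t : ℝ, 0 ≤ t → rho k t = sigma k t := by
  intro k
  induction k using Nat.strong_induction_on with
  | _ k IH =>
  intro hk t ht
  -- the convolution sums agree, by the induction hypothesis
  have hsum : ∀ s : ℝ, 0 ≤ s →
      (∑ c ∈ Finset.Ioo 0 k, rho c s * rho (k - c) s)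
        = ∑ c ∈ Finset.Ioo 0 k, sigma c s * sigma (k - c) s := by
    intro s hs
    refine Finset.sum_congr rfl fun c hc => ?_
    rw [Finset.mem_Ioo] at hc
    rw [IH c hc.2 hc.1 s hs, IH (k - c) (by omega) (by omega) s hs]
  set g : ℝ → ℝ := fun s => (rho k s - sigma k s) * Real.exp (2 * k * s) with hg
  have hd0 : rho k 0 = sigma k 0 := by
    rcases Nat.lt_or_ge k 2 with h | h
    · have hk1 : k = 1 := by omega
      rw [hk1, hrho.init_one, hsigma.init_one]
    · rw [hrho.init_zero k h, hsigma.init_zero k h]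
  -- g has right derivative 0 everywhere on [0,∞)
  have hderiv' : ∀ x : ℝ, 0 ≤ x → HasDerivWithinAt g 0 (Set.Ici (0 : ℝ)) x := by
    intro x hx
    have hexp : HasDerivAt (fun s : ℝ => Real.exp (2 * k * s))
        (Real.exp (2 * k * x) * (2 * k)) x := by
      have h1 : HasDerivAt (fun s : ℝ => 2 * (k : ℝ) * s) (2 * k) x := by
        simpa using (hasDerivAt_id x).const_mul (2 * (k : ℝ))
      exact h1.exp
    have hsub : HasDerivWithinAt (fun s => rho k s - sigma k s)
        (-(2 * k) * (rho k x - sigma k x)) (Set.Ici (0 : ℝ)) x := by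
      rcases eq_or_lt_of_le hx with h0 | h0
      · have h := (hrho.hasDeriv_zero k hk).sub (hsigma.hasDeriv_zero k hk)
        rw [← h0] at *
        refine h.congr_deriv ?_
        rw [hsum 0 le_rfl]; ring
      · have h := ((hrho.hasDeriv k hk x h0).sub
          (hsigma.hasDeriv k hk x h0)).hasDerivWithinAt (s := Set.Ici (0 : ℝ))
        refine h.congr_deriv ?_
        rw [hsum x hx]; ring
    have := hsub.mul hexp.hasDerivWithinAt
    refine this.congr_deriv ?_
    ring
  have hcont : ContinuousOn g (Set.Icc 0 t) := fun x hx =>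
    (hderiv' x hx.1).continuousWithinAt.mono (fun y hy => hy.1)
  have hder : ∀ x ∈ Set.Ico (0 : ℝ) t, HasDerivWithinAt g 0 (Set.Ici x) x :=
    fun x hx => (hderiv' x hx.1).mono (Set.Ici_subset_Ici.2 hx.1)
  have := constant_of_has_deriv_right_zero hcont hder t ⟨ht, le_rfl⟩
  have hg0 : g 0 = 0 := by simp [hg, hd0]
  rw [hg0] at this
  have hexp_ne : Real.exp (2 * k * t) ≠ 0 := (Real.exp_pos _).ne'
  have := mul_eq_zero.mp this
  rcases this with h | h
  · linarith [h]
  · exact absurd h hexp_ne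
end
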